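/- Let u: (0,∞) → ℝ be strictly concave and differentiable with strictly decreasing derivative u', let I = (u')⁻¹, and let z, y₁, y₂, q > 0. Then the function f(x) = u(x) - y₁ z x - y₂ max(q - x, 0) on (0,∞) attains its maximum at x* given by: x* = I(y₁ z) if y₁ z < u'(q); x* = q if u'(q) ≤ y₁ z < u'(q) + y₂; and x* = I(y₁ z - y₂) if u'(q) + y₂ ≤ y₁ z. -/
import Mathlib

open Set

/-- Tangent line inequality for a function with strictly decreasing derivative. -/
lemma tangent_le {u u' : ℝ → ℝ}
    (hderiv : ∀ x ∈ Set.Ioi (0 : ℝ), HasDerivAt u (u' x) x)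
    (hanti : StrictAntiOn u' (Set.Ioi 0))
    {t x : ℝ} (ht : t ∈ Set.Ioi (0:ℝ)) (hx : x ∈ Set.Ioi (0:ℝ)) :
    u x - u t ≤ u' t * (x - t) := by
  rcases lt_trichotomy x t with h | h | h
  · have hcont : ContinuousOn u (Icc x t) := fun y hy =>
      (hderiv y (lt_of_lt_of_le hx hy.1)).continuousAt.continuousWithinAt
    obtain ⟨c, hc, hc'⟩ := exists_hasDerivAt_eq_slope u u' h hcont
      (fun y hy => hderiv y (lt_trans hx hy.1))
    have hcpos : c ∈ Set.Ioi (0:ℝ) := lt_trans hx hc.1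
    have : u' t < u' c := hanti hcpos ht hc.2
    have hslope : u t - u x = u' c * (t - x) :=
      (div_eq_iff (sub_ne_zero.mpr (ne_of_gt h))).mp hc'.symm
    nlinarith [sub_pos.mpr h]
  · simp [h]
  · have hcont : ContinuousOn u (Icc t x) := fun y hy =>
      (hderiv y (lt_of_lt_of_le ht hy.1)).continuousAt.continuousWithinAt
    obtain ⟨c, hc, hc'⟩ := exists_hasDerivAt_eq_slope u u' h hcont
      (fun y hy => hderiv y (lt_trans ht hy.1))
    have hcpos : c ∈ Set.Ioi (0:ℝ) := lt_trans ht hc.1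
    have : u' c < u' t := hanti ht hcpos hc.1
    have hslope : u x - u t = u' c * (x - t) :=
      (div_eq_iff (sub_ne_zero.mpr (ne_of_gt h))).mp hc'.symm
    nlinarith [sub_pos.mpr h]

theorem stmt_1 (u u' I : ℝ → ℝ)
    (hconc : StrictConcaveOn ℝ (Set.Ioi 0) u)
    (hderiv : ∀ x ∈ Set.Ioi (0 : ℝ), HasDerivAt u (u' x) x)
    (hanti : StrictAntiOn u' (Set.Ioi 0))
    (hIpos : ∀ y > (0 : ℝ), I y ∈ Set.Ioi (0 : ℝ))
    (hI : ∀ y > (0 : ℝ), u' (I y) = y)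
    (hI' : ∀ x ∈ Set.Ioi (0 : ℝ), I (u' x) = x)
    (z y₁ y₂ q : ℝ) (hz : 0 < z) (hy₁ : 0 < y₁) (hy₂ : 0 < y₂) (hq : 0 < q)
    (xstar : ℝ)
    (hx : xstar =
      if y₁ * z < u' q then I (y₁ * z)
      else if y₁ * z < u' q + y₂ then q
      else I (y₁ * z - y₂)) :
    IsMaxOn (fun x : ℝ => u x - y₁ * z * x - y₂ * max (q - x) 0) (Set.Ioi 0) xstar := by
  have hqmem : q ∈ Set.Ioi (0:ℝ) := hq
  have ha : 0 < y₁ * z := mul_pos hy₁ hz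
  rw [isMaxOn_iff]
  subst hx
  split_ifs with h1 h2
  · -- case 1 : y₁ z < u' q, xstar = I (y₁ z)
    have hs : I (y₁*z) ∈ Set.Ioi (0:ℝ) := hIpos _ ha
    have hus : u' (I (y₁*z)) = y₁*z := hI _ ha
    have hgt : q < I (y₁*z) := by
      by_contra hle
      push_neg at hle
      rcases eq_or_lt_of_le hle with he | hl
      · rw [← he] at h1; linarith [hus]
      · have := hanti hs hqmem hl; linarith [hus]
    intro x hxm
    show u x - y₁ * z * x - y₂ * max (q - x) 0 ≤
      u (I (y₁*z)) - y₁ * z * I (y₁*z) - y₂ * max (q - I (y₁*z)) 0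
    have ht := tangent_le hderiv hanti hs hxm
    have hM : max (q - I (y₁*z)) 0 = 0 := max_eq_right (by linarith)
    have hM2 : (0:ℝ) ≤ max (q - x) 0 := le_max_right _ _
    rw [hM]
    rw [hus] at ht
    nlinarith [ht, mul_nonneg hy₂.le hM2]
  · -- case 2 : u' q ≤ y₁ z < u' q + y₂, xstar = q
    push_neg at h1
    intro x hxm
    show u x - y₁ * z * x - y₂ * max (q - x) 0 ≤
      u q - y₁ * z * q - y₂ * max (q - q) 0
    have ht := tangent_le hderiv hanti hqmem hxm
    have hM0 : max (q - q) 0 = 0 := by simp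
    rw [hM0]
    rcases le_or_gt x q with hle | hlt
    · have hM : max (q - x) 0 = q - x := max_eq_left (by linarith)
      rw [hM]
      nlinarith [mul_nonneg (by linarith : (0:ℝ) ≤ y₂ + u' q - y₁*z)
        (by linarith : (0:ℝ) ≤ q - x)]
    · have hM : max (q - x) 0 = 0 := max_eq_right (by linarith)
      rw [hM]
      nlinarith [mul_nonneg (by linarith : (0:ℝ) ≤ y₁*z - u' q)
        (by linarith : (0:ℝ) ≤ x - q)]
  · -- case 3 : u' q + y₂ ≤ y₁ z, xstar = I (y₁ z - y₂)
    push_neg at h1 h2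
    -- find x₀ ∈ Ioi 0 with u' x₀ = y₁ z - y₂ and I (y₁ z - y₂) = x₀
    have key : I (y₁*z - y₂) ∈ Set.Ioi (0:ℝ) ∧ u' (I (y₁*z - y₂)) = y₁*z - y₂ := by
      rcases lt_or_ge 0 (y₁*z - y₂) with hpos | hnp
      · exact ⟨hIpos _ hpos, hI _ hpos⟩
      · rcases eq_or_lt_of_le (by linarith : u' q ≤ y₁*z - y₂) with he | hlt
        · have hIq : I (y₁*z - y₂) = q := by rw [← he, hI' q hqmem]
          rw [hIq]; exact ⟨hqmem, he⟩
        · -- Darboux between I (y₁ z) and q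
          have hsA : I (y₁*z) ∈ Set.Ioi (0:ℝ) := hIpos _ ha
          have husA : u' (I (y₁*z)) = y₁*z := hI _ ha
          have hAq : I (y₁*z) < q := by
            rcases lt_trichotomy (I (y₁*z)) q with h | h | h
            · exact h
            · rw [h] at husA; linarith
            · have := hanti hqmem hsA h; linarith
          have hder : ∀ x ∈ Icc (I (y₁*z)) q,
              HasDerivWithinAt u (u' x) (Icc (I (y₁*z)) q) x := fun x hxi =>
            (hderiv x (lt_of_lt_of_le hsA hxi.1)).hasDerivWithinAt
          obtain ⟨c, hc, hc'⟩ := exists_hasDerivWithinAt_eq_of_lt_of_gt hAq.le hder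
            (by linarith : y₁*z - y₂ < u' (I (y₁*z))) hlt
          have hcpos : c ∈ Set.Ioi (0:ℝ) := lt_trans hsA hc.1
          have hIc : I (y₁*z - y₂) = c := by rw [← hc', hI' c hcpos]
          rw [hIc]; exact ⟨hcpos, hc'⟩
    obtain ⟨hs, hus⟩ := key
    have hsq : I (y₁*z - y₂) ≤ q := by
      by_contra hgt
      push_neg at hgt
      have := hanti hqmem hs hgt
      linarith
    intro x hxm
    show u x - y₁ * z * x - y₂ * max (q - x) 0 ≤
      u (I (y₁*z - y₂)) - y₁ * z * I (y₁*z - y₂) - y₂ * max (q - I (y₁*z - y₂)) 0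
    have ht := tangent_le hderiv hanti hs hxm
    have hMs : max (q - I (y₁*z - y₂)) 0 = q - I (y₁*z - y₂) :=
      max_eq_left (by linarith)
    have hM2 : q - x ≤ max (q - x) 0 := le_max_left _ _
    rw [hMs]
    rw [hus] at ht
    nlinarith [ht, mul_nonneg hy₂.le (by linarith : (0:ℝ) ≤ max (q - x) 0 - (q - x))]
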